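/- Every permutive cellular automaton on A^{Σ*} is preinjective, i.e., it has no diamonds: there is no pair of distinct blocks p₁ ≠ p₂ with the same support Δ_n (n > 2r+2), coinciding with a fixed block p ∈ A^{Δ_r} on Δ_r and on vΔ_r for each word v of length n−r, and having the same image under the local map μ. -/

import Mathlib

open Function

variable {Sig A : Type*}

/-- Configurations over the tree `Sig*`: maps from the free monoid (lists) to `A`. -/
abbrev Config (Sig A : Type*) := List Sig → A

/-- Shift action: `(shift f v) w = f (v ++ w)`. -/
def shift (f : Config Sig A) (v : List Sig) : Config Sig A := fun w => f (v ++ w)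

/-- `Delta Sig n` is the set of words of length `< n` (i.e. `Δ_n`). -/
def Delta (Sig : Type*) (n : ℕ) : Type _ := {w : List Sig // w.length < n}

/-- Restriction of a configuration to `Δ_n`. -/
def restrict (f : Config Sig A) (n : ℕ) : Delta Sig n → A := fun w => f w.val

/-- The CA defined by a local map `μ` of radius `r`. -/
def caMap (r : ℕ) (μ : (Delta Sig (r + 1) → A) → A) : Config Sig A → Config Sig A :=
  fun f v => μ (restrict (shift f v) (r + 1))

/-- `τ` is a cellular automaton: it admits a radius `r ≥ 1` and a local defining map. -/
def IsCA (τ : Config Sig A → Config Sig A) : Prop :=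
  ∃ r : ℕ, 1 ≤ r ∧ ∃ μ : (Delta Sig (r + 1) → A) → A,
    ∀ (f : Config Sig A) (v : List Sig), τ f v = μ (restrict (shift f v) (r + 1))

/-- A subshift: a closed, shift-invariant set of configurations. -/
def IsSubshift [TopologicalSpace A] (X : Set (Config Sig A)) : Prop :=
  IsClosed X ∧ ∀ f ∈ X, ∀ v : List Sig, shift f v ∈ X

/-- The blocks of size `n` of `X`. -/
def blockSet (X : Set (Config Sig A)) (n : ℕ) : Set (Delta Sig n → A) :=
  {p | ∃ f ∈ X, restrict f n = p}

/-- Positive expansiveness with constant `N`. -/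
def PosExpansive (τ : Config Sig A → Config Sig A) (N : ℕ) : Prop :=
  1 ≤ N ∧ ∀ f₁ f₂ : Config Sig A, f₁ ≠ f₂ →
    ∃ t : ℕ, restrict (τ^[t] f₁) N ≠ restrict (τ^[t] f₂) N

/-- The set `P(τ, n, t)` of `t`-tuples of traces on `Δ_n`. -/
def Pset (τ : Config Sig A → Config Sig A) (n t : ℕ) : Set (Fin t → Delta Sig n → A) :=
  {s | ∃ f : Config Sig A, ∀ i : Fin t, s i = restrict (τ^[(i : ℕ)] f) n}

/-- The block `a ◁ p` on `Δ_{r+1}` with root value `a` and agreeing with `p` elsewhere. -/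
def rootIns (r : ℕ) (a : A) (p : {w : List Sig // w.length < r + 1 ∧ w ≠ []} → A) :
    Delta Sig (r + 1) → A :=
  fun w => if h : w.val.length = 0 then a else
    p ⟨w.val, ⟨w.2, fun he => h (by simp [he])⟩⟩

/-- Permutivity: for every pattern on `Δ_{r+1} \ {ε}`, the induced map on root values is
a permutation of `A`. -/
def Permutive (r : ℕ) (μ : (Delta Sig (r + 1) → A) → A) : Prop :=
  ∀ p : {w : List Sig // w.length < r + 1 ∧ w ≠ []} → A,
    Function.Bijective (fun a : A => μ (rootIns r a p))

/-- The image under the local map `μ` of a block of size `n + r`: a block of size `n`. -/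
def blockImage (r n : ℕ) (μ : (Delta Sig (r + 1) → A) → A)
    (p : Delta Sig (n + r) → A) : Delta Sig n → A :=
  fun v => μ (fun w => p ⟨v.val ++ w.val, by
    have hv := v.2; have hw := w.2
    simp only [List.length_append]; omega⟩)

/-- A diamond of `(r, μ)`: two distinct blocks of size `n = m + r > 2r + 2` coinciding
with a block `p ∈ A^{Δ_r}` on `Δ_r` and on `vΔ_r` for every `v` of length `m = n - r`,
with the same image under `μ`. -/
def HasDiamond (r : ℕ) (μ : (Delta Sig (r + 1) → A) → A) : Prop :=
  ∃ (m : ℕ) (_ : r + 2 < m) (p : Delta Sig r → A)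
    (p₁ p₂ : Delta Sig (m + r) → A),
    p₁ ≠ p₂ ∧
    (∀ w : Delta Sig r,
      p₁ ⟨w.val, by have := w.2; omega⟩ = p w ∧
      p₂ ⟨w.val, by have := w.2; omega⟩ = p w) ∧
    (∀ v : List Sig, ∀ hv : v.length = m, ∀ w : Delta Sig r,
      p₁ ⟨v ++ w.val, by have := w.2; simp only [List.length_append]; omega⟩ = p w ∧
      p₂ ⟨v ++ w.val, by have := w.2; simp only [List.length_append]; omega⟩ = p w) ∧
    blockImage r m μ p₁ = blockImage r m μ p₂

/-- Right-closingness of the CA `caMap r μ`. -/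
def RightClosing (r : ℕ) (μ : (Delta Sig (r + 1) → A) → A) : Prop :=
  ∃ N : ℕ, ∀ (p : Delta Sig r → A) (q : Delta Sig (r * N) → A),
    (∃ f : Config Sig A, restrict f r = p ∧ restrict (caMap r μ f) (r * N) = q) →
    ∃! ps : {v : List Sig // v.length = r} → Delta Sig r → A,
      ∀ f : Config Sig A, restrict f r = p → restrict (caMap r μ f) (r * N) = q →
        ∀ (v : {v : List Sig // v.length = r}) (w : Delta Sig r),
          f (v.val ++ w.val) = ps v w


/-- permutive CA are preinjective (they have no diamonds). -/
theorem permutive_preinjective [Finite Sig] [Finite A] [Nonempty A]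
    (r : ℕ) (hr : 1 ≤ r) (μ : (Delta Sig (r + 1) → A) → A)
    (hperm : Permutive r μ) :
    ¬ HasDiamond r μ := by
  rintro ⟨m, hm, p, p₁, p₂, hne, hroot, hbound, himg⟩
  apply hne
  have key : ∀ k u (h : u.length < m + r), m + r - u.length = k →
      p₁ ⟨u, h⟩ = p₂ ⟨u, h⟩ := by
    intro k
    induction k using Nat.strong_induction_on with
    | _ k IH =>
      intro u h hk
      by_cases hlen : m ≤ u.length
      · -- boundary region
        have h1 : (u.take m).length = m := by simp; omega
        have h2 : (u.drop m).length < r := by simp; omega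
        have hsplit : u = u.take m ++ u.drop m := (List.take_append_drop m u).symm
        obtain ⟨e1, e2⟩ := hbound (u.take m) h1 ⟨u.drop m, h2⟩
        have : p₁ ⟨u.take m ++ u.drop m, by
            simp only [List.length_append]; omega⟩ =
            p₂ ⟨u.take m ++ u.drop m, by
            simp only [List.length_append]; omega⟩ := by rw [e1, e2]
        convert this using 2 <;> exact congrArg _ (Subtype.ext hsplit)
      · -- interior: use permutivity
        push_neg at hlen
        set pat : {w : List Sig // w.length < r + 1 ∧ w ≠ []} → A :=
          fun w => p₁ ⟨u ++ w.val, by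
            have := w.2.1; simp only [List.length_append]; omega⟩ with hpat
        have hext : ∀ (w : List Sig) (hw : w.length < r + 1) (hne' : w ≠ []),
            p₁ ⟨u ++ w, by simp only [List.length_append]; omega⟩ =
            p₂ ⟨u ++ w, by simp only [List.length_append]; omega⟩ := by
          intro w hw hne'
          have hwpos : 0 < w.length := List.length_pos_iff.mpr hne'
          exact IH (m + r - (u ++ w).length)
            (by simp only [List.length_append]; omega) (u ++ w) _ rfl
        have h₁ : rootIns r (p₁ ⟨u, h⟩) pat =
            fun w : Delta Sig (r + 1) => p₁ ⟨u ++ w.val, by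
              have := w.2; simp only [List.length_append]; omega⟩ := by
          funext w
          unfold rootIns
          split
          · next h0 =>
            have : w.val = [] := List.length_eq_zero_iff.mp h0
            congr 1
            exact Subtype.ext (by simp [this])
          · rfl
        have h₂ : rootIns r (p₂ ⟨u, h⟩) pat =
            fun w : Delta Sig (r + 1) => p₂ ⟨u ++ w.val, by
              have := w.2; simp only [List.length_append]; omega⟩ := by
          funext w
          unfold rootIns
          split
          · next h0 =>
            have : w.val = [] := List.length_eq_zero_iff.mp h0
            congr 1
            exact Subtype.ext (by simp [this])
          · next h0 =>
            have hne' : w.val ≠ [] := fun he => h0 (by simp [he])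
            exact hext w.val w.2 hne'
        have himg' : blockImage r m μ p₁ ⟨u, hlen⟩ = blockImage r m μ p₂ ⟨u, hlen⟩ := by
          rw [himg]
        have : μ (rootIns r (p₁ ⟨u, h⟩) pat) = μ (rootIns r (p₂ ⟨u, h⟩) pat) := by
          rw [h₁, h₂]
          exact himg'
        exact (hperm pat).injective this
  funext u
  have := key (m + r - u.val.length) u.val u.2 rfl
  convert this using 2 <;> exact congrArg _ (Subtype.ext rfl)
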